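/- Let m ≥ 1, h > 0, B > 0, M ≥ 0. Let v : (Fin m)³ → ℝ³ with ‖v(l)‖₂ ≤ B for all l, and let U, Ũ : (Fin m)³ → ℝ³ with ‖U(k)‖₂ ≤ B and ‖Ũ(k)‖₂ ≤ B for all k. Let F, F̃ : ((Fin m)³ × (Fin m)³) → ℝ with |F(k,l)| ≤ M for all k, l. Define Ψ(k) = h³·Σ_l ‖v(l) − U(k)‖₂²·F(k,l) and Ψ̃(k) = h³·Σ_l ‖v(l) − Ũ(k)‖₂²·F̃(k,l). Then √(Σ_k (Ψ̃(k) − Ψ(k))²) ≤ 4B²·h³·m^{3/2}·√(Σ_{k,l}(F̃(k,l) − F(k,l))²) + 4B·h³·m³·M·√(Σ_k ‖Ũ(k) − U(k)‖₂²). -/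

import Mathlib

open scoped BigOperators

private lemma sqrt_sum_sq_add_le {ι : Type*} [Fintype ι] (a b : ι → ℝ) :
    Real.sqrt (∑ i, (a i + b i) ^ 2) ≤
      Real.sqrt (∑ i, a i ^ 2) + Real.sqrt (∑ i, b i ^ 2) := by
  set A := ∑ i, a i ^ 2 with hA
  set Bs := ∑ i, b i ^ 2 with hBs
  have hA0 : (0:ℝ) ≤ A := Finset.sum_nonneg fun i _ => sq_nonneg _
  have hB0 : (0:ℝ) ≤ Bs := Finset.sum_nonneg fun i _ => sq_nonneg _
  have hcs : ∑ i, a i * b i ≤ Real.sqrt A * Real.sqrt Bs := by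
    simpa [hA, hBs] using Real.sum_mul_le_sqrt_mul_sqrt Finset.univ a b
  have hexp : ∑ i, (a i + b i) ^ 2 = A + 2 * ∑ i, a i * b i + Bs := by
    simp only [hA, hBs, add_sq, Finset.sum_add_distrib, Finset.mul_sum]
    ring_nf
  have hle : ∑ i, (a i + b i) ^ 2 ≤ (Real.sqrt A + Real.sqrt Bs) ^ 2 := by
    have h1 : Real.sqrt A ^ 2 = A := Real.sq_sqrt hA0
    have h2 : Real.sqrt Bs ^ 2 = Bs := Real.sq_sqrt hB0
    rw [hexp, add_sq, h1, h2]
    linarith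
  calc Real.sqrt (∑ i, (a i + b i) ^ 2)
      ≤ Real.sqrt ((Real.sqrt A + Real.sqrt Bs) ^ 2) := Real.sqrt_le_sqrt hle
    _ = Real.sqrt A + Real.sqrt Bs := Real.sqrt_sq (by positivity)

/-- Perturbation bound for the discrete second velocity moment
`Ψ(k) = h³ Σ_l ‖v^l − U_k‖² F(k,l)` appearing in the discretization of the
temperature, used in the proof of Theorem 1 of the paper. -/
theorem second_moment_stability (m : ℕ) (hm : 1 ≤ m) (h B M : ℝ)
    (hh : 0 < h) (hB : 0 < B) (hM : 0 ≤ M)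
    (v U Ut : (Fin m × Fin m × Fin m) → EuclideanSpace ℝ (Fin 3))
    (hv : ∀ l, ‖v l‖ ≤ B) (hU : ∀ k, ‖U k‖ ≤ B) (hUt : ∀ k, ‖Ut k‖ ≤ B)
    (F Ft : (Fin m × Fin m × Fin m) × (Fin m × Fin m × Fin m) → ℝ)
    (hF : ∀ p, |F p| ≤ M) :
    Real.sqrt (∑ k : Fin m × Fin m × Fin m,
        ((h ^ 3 * ∑ l : Fin m × Fin m × Fin m, ‖v l - Ut k‖ ^ 2 * Ft (k, l))
          - (h ^ 3 * ∑ l : Fin m × Fin m × Fin m, ‖v l - U k‖ ^ 2 * F (k, l))) ^ 2)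
      ≤ 4 * B ^ 2 * h ^ 3 * (m : ℝ) ^ ((3 : ℝ) / 2) *
          Real.sqrt (∑ p : (Fin m × Fin m × Fin m) × (Fin m × Fin m × Fin m),
            (Ft p - F p) ^ 2)
        + 4 * B * h ^ 3 * (m : ℝ) ^ 3 * M *
          Real.sqrt (∑ k : Fin m × Fin m × Fin m, ‖Ut k - U k‖ ^ 2) := by
  classical
  have hcard : ((Finset.univ : Finset (Fin m × Fin m × Fin m)).card : ℝ) = (m : ℝ) ^ 3 := by
    simp [Finset.card_univ]
    push_cast
    ring
  set Δ : (Fin m × Fin m × Fin m) → ℝ := fun k =>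
    (h ^ 3 * ∑ l : Fin m × Fin m × Fin m, ‖v l - Ut k‖ ^ 2 * Ft (k, l))
      - (h ^ 3 * ∑ l : Fin m × Fin m × Fin m, ‖v l - U k‖ ^ 2 * F (k, l)) with hΔ
  set a : (Fin m × Fin m × Fin m) → ℝ := fun k =>
    4 * B ^ 2 * h ^ 3 * ∑ l : Fin m × Fin m × Fin m, |Ft (k, l) - F (k, l)| with ha
  set c : (Fin m × Fin m × Fin m) → ℝ := fun k =>
    4 * B * h ^ 3 * (m : ℝ) ^ 3 * M * ‖Ut k - U k‖ with hc
  -- pointwise bound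
  have key : ∀ k, |Δ k| ≤ a k + c k := by
    intro k
    have hterm : ∀ l : Fin m × Fin m × Fin m,
        |‖v l - Ut k‖ ^ 2 * Ft (k, l) - ‖v l - U k‖ ^ 2 * F (k, l)|
          ≤ 4 * B ^ 2 * |Ft (k, l) - F (k, l)| + 4 * B * M * ‖Ut k - U k‖ := by
      intro l
      have h1 : ‖v l - Ut k‖ ≤ 2 * B := by
        have := hv l; have := hUt k; linarith [norm_sub_le (v l) (Ut k)]
      have h2 : ‖v l - U k‖ ≤ 2 * B := by
        have := hv l; have := hU k; linarith [norm_sub_le (v l) (U k)]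
      have h1' : (0:ℝ) ≤ ‖v l - Ut k‖ := norm_nonneg _
      have h2' : (0:ℝ) ≤ ‖v l - U k‖ := norm_nonneg _
      have hsq : ‖v l - Ut k‖ ^ 2 ≤ 4 * B ^ 2 := by nlinarith
      have hdiff : |‖v l - Ut k‖ - ‖v l - U k‖| ≤ ‖Ut k - U k‖ := by
        have := abs_norm_sub_norm_le (v l - Ut k) (v l - U k)
        have heq : v l - Ut k - (v l - U k) = U k - Ut k := by abel
        rw [heq] at this
        rwa [norm_sub_rev (U k)] at this
      have hsqdiff : |‖v l - Ut k‖ ^ 2 - ‖v l - U k‖ ^ 2| ≤ 4 * B * ‖Ut k - U k‖ := by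
        have hfac : ‖v l - Ut k‖ ^ 2 - ‖v l - U k‖ ^ 2
            = (‖v l - Ut k‖ + ‖v l - U k‖) * (‖v l - Ut k‖ - ‖v l - U k‖) := by ring
        rw [hfac, abs_mul]
        have hab : |‖v l - Ut k‖ + ‖v l - U k‖| ≤ 4 * B := by
          rw [abs_of_nonneg (by linarith)]; linarith
        exact mul_le_mul hab hdiff (abs_nonneg _) (by linarith)
      have hsplit : ‖v l - Ut k‖ ^ 2 * Ft (k, l) - ‖v l - U k‖ ^ 2 * F (k, l)
          = ‖v l - Ut k‖ ^ 2 * (Ft (k, l) - F (k, l))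
            + (‖v l - Ut k‖ ^ 2 - ‖v l - U k‖ ^ 2) * F (k, l) := by ring
      rw [hsplit]
      calc |‖v l - Ut k‖ ^ 2 * (Ft (k, l) - F (k, l))
            + (‖v l - Ut k‖ ^ 2 - ‖v l - U k‖ ^ 2) * F (k, l)|
          ≤ |‖v l - Ut k‖ ^ 2 * (Ft (k, l) - F (k, l))|
            + |(‖v l - Ut k‖ ^ 2 - ‖v l - U k‖ ^ 2) * F (k, l)| := abs_add_le _ _
        _ = |‖v l - Ut k‖ ^ 2| * |Ft (k, l) - F (k, l)|
            + |‖v l - Ut k‖ ^ 2 - ‖v l - U k‖ ^ 2| * |F (k, l)| := by rw [abs_mul, abs_mul]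
        _ ≤ 4 * B ^ 2 * |Ft (k, l) - F (k, l)| + (4 * B * ‖Ut k - U k‖) * M := by
            gcongr
            · rw [abs_of_nonneg (sq_nonneg _)]; exact hsq
            · exact hF _
        _ = 4 * B ^ 2 * |Ft (k, l) - F (k, l)| + 4 * B * M * ‖Ut k - U k‖ := by ring
    have hΔk : Δ k = h ^ 3 * ∑ l : Fin m × Fin m × Fin m,
        (‖v l - Ut k‖ ^ 2 * Ft (k, l) - ‖v l - U k‖ ^ 2 * F (k, l)) := by
      rw [hΔ]
      simp only
      rw [Finset.sum_sub_distrib]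
      ring
    rw [hΔk, abs_mul, abs_of_nonneg (by positivity : (0:ℝ) ≤ h ^ 3)]
    calc h ^ 3 * |∑ l : Fin m × Fin m × Fin m,
            (‖v l - Ut k‖ ^ 2 * Ft (k, l) - ‖v l - U k‖ ^ 2 * F (k, l))|
        ≤ h ^ 3 * ∑ l : Fin m × Fin m × Fin m,
            |‖v l - Ut k‖ ^ 2 * Ft (k, l) - ‖v l - U k‖ ^ 2 * F (k, l)| := by
          gcongr
          exact Finset.abs_sum_le_sum_abs _ _
      _ ≤ h ^ 3 * ∑ l : Fin m × Fin m × Fin m,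
            (4 * B ^ 2 * |Ft (k, l) - F (k, l)| + 4 * B * M * ‖Ut k - U k‖) := by
          gcongr with l hl
          exact hterm l
      _ = a k + c k := by
          rw [Finset.sum_add_distrib, ← Finset.mul_sum, Finset.sum_const, nsmul_eq_mul,
            hcard, ha, hc]
          ring
  have hstep1 : Real.sqrt (∑ k, (Δ k) ^ 2) ≤ Real.sqrt (∑ k, (a k + c k) ^ 2) := by
    apply Real.sqrt_le_sqrt
    apply Finset.sum_le_sum
    intro k _
    have h1 : |Δ k| ^ 2 ≤ (a k + c k) ^ 2 :=
      pow_le_pow_left₀ (abs_nonneg _) (key k) 2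
    rwa [sq_abs] at h1
  have hstep2 := sqrt_sum_sq_add_le a c
  -- bound √Σ a²
  have hsqa : Real.sqrt (∑ k, (a k) ^ 2)
      ≤ 4 * B ^ 2 * h ^ 3 * (m : ℝ) ^ ((3 : ℝ) / 2) *
          Real.sqrt (∑ p : (Fin m × Fin m × Fin m) × (Fin m × Fin m × Fin m),
            (Ft p - F p) ^ 2) := by
    have hCB : (0:ℝ) ≤ 4 * B ^ 2 * h ^ 3 := by positivity
    have h1 : ∑ k, (a k) ^ 2
        = (4 * B ^ 2 * h ^ 3) ^ 2 *
          ∑ k : Fin m × Fin m × Fin m,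
            (∑ l : Fin m × Fin m × Fin m, |Ft (k, l) - F (k, l)|) ^ 2 := by
      rw [Finset.mul_sum]
      refine Finset.sum_congr rfl fun k _ => ?_
      rw [ha]; ring
    have h2 : ∑ k : Fin m × Fin m × Fin m,
          (∑ l : Fin m × Fin m × Fin m, |Ft (k, l) - F (k, l)|) ^ 2
        ≤ (m:ℝ) ^ 3 * ∑ p : (Fin m × Fin m × Fin m) × (Fin m × Fin m × Fin m),
            (Ft p - F p) ^ 2 := by
      conv_rhs => rw [Fintype.sum_prod_type]
      rw [Finset.mul_sum]
      apply Finset.sum_le_sum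
      intro k _
      have := sq_sum_le_card_mul_sum_sq (s := (Finset.univ : Finset (Fin m × Fin m × Fin m)))
        (f := fun l => |Ft (k, l) - F (k, l)|)
      simp only [sq_abs] at this
      calc (∑ l : Fin m × Fin m × Fin m, |Ft (k, l) - F (k, l)|) ^ 2
          ≤ ((Finset.univ : Finset (Fin m × Fin m × Fin m)).card : ℝ) *
              ∑ l : Fin m × Fin m × Fin m, (Ft (k, l) - F (k, l)) ^ 2 := this
        _ = (m:ℝ) ^ 3 * ∑ l : Fin m × Fin m × Fin m, (Ft (k, l) - F (k, l)) ^ 2 := by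
            rw [hcard]
    have hm32 : Real.sqrt ((m:ℝ) ^ 3) = (m : ℝ) ^ ((3 : ℝ) / 2) := by
      rw [Real.sqrt_eq_rpow, ← Real.rpow_natCast (m:ℝ) 3,
        ← Real.rpow_mul (Nat.cast_nonneg m)]
      norm_num
    calc Real.sqrt (∑ k, (a k) ^ 2)
        = (4 * B ^ 2 * h ^ 3) *
            Real.sqrt (∑ k : Fin m × Fin m × Fin m,
              (∑ l : Fin m × Fin m × Fin m, |Ft (k, l) - F (k, l)|) ^ 2) := by
          rw [h1, Real.sqrt_mul (sq_nonneg _), Real.sqrt_sq hCB]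
      _ ≤ (4 * B ^ 2 * h ^ 3) *
            Real.sqrt ((m:ℝ) ^ 3 *
              ∑ p : (Fin m × Fin m × Fin m) × (Fin m × Fin m × Fin m), (Ft p - F p) ^ 2) :=
          mul_le_mul_of_nonneg_left (Real.sqrt_le_sqrt h2) hCB
      _ = 4 * B ^ 2 * h ^ 3 * (m : ℝ) ^ ((3 : ℝ) / 2) *
            Real.sqrt (∑ p : (Fin m × Fin m × Fin m) × (Fin m × Fin m × Fin m),
              (Ft p - F p) ^ 2) := by
          rw [Real.sqrt_mul (by positivity), hm32]
          ring
  have hsqc : Real.sqrt (∑ k, (c k) ^ 2)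
      = 4 * B * h ^ 3 * (m : ℝ) ^ 3 * M *
          Real.sqrt (∑ k : Fin m × Fin m × Fin m, ‖Ut k - U k‖ ^ 2) := by
    have hC : (0:ℝ) ≤ 4 * B * h ^ 3 * (m : ℝ) ^ 3 * M := by positivity
    have h1 : ∑ k, (c k) ^ 2
        = (4 * B * h ^ 3 * (m : ℝ) ^ 3 * M) ^ 2 *
            ∑ k : Fin m × Fin m × Fin m, ‖Ut k - U k‖ ^ 2 := by
      rw [Finset.mul_sum]
      refine Finset.sum_congr rfl fun k _ => ?_
      rw [hc]; ring
    rw [h1, Real.sqrt_mul (sq_nonneg _), Real.sqrt_sq hC]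
  calc Real.sqrt (∑ k, (Δ k) ^ 2)
      ≤ Real.sqrt (∑ k, (a k + c k) ^ 2) := hstep1
    _ ≤ Real.sqrt (∑ k, (a k) ^ 2) + Real.sqrt (∑ k, (c k) ^ 2) := hstep2
    _ ≤ 4 * B ^ 2 * h ^ 3 * (m : ℝ) ^ ((3 : ℝ) / 2) *
          Real.sqrt (∑ p : (Fin m × Fin m × Fin m) × (Fin m × Fin m × Fin m),
            (Ft p - F p) ^ 2)
        + 4 * B * h ^ 3 * (m : ℝ) ^ 3 * M *
          Real.sqrt (∑ k : Fin m × Fin m × Fin m, ‖Ut k - U k‖ ^ 2) := by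
        rw [hsqc]
        exact add_le_add_left hsqa _
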